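/- For all real numbers x and y, the pairwise box-plus operation defined by x ⊞ y = log((1 + e^{x+y})/(e^x + e^y)) equals sign(x)·sign(y)·min(|x|,|y|) + s(x,y), where s(x,y) = log(1 + e^{-|x+y|}) - log(1 + e^{-|x-y|}). -/

import Mathlib

/-- Box-plus operator x ⊞ y = log((1+e^{x+y})/(e^x+e^y)). -/
noncomputable def boxplus (x y : ℝ) : ℝ :=
  Real.log ((1 + Real.exp (x + y)) / (Real.exp x + Real.exp y))

/-- Box-plus correction term s(x,y) = log(1+e^{-|x+y|}) - log(1+e^{-|x-y|}). -/
noncomputable def sCorr (x y : ℝ) : ℝ :=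
  Real.log (1 + Real.exp (-|x + y|)) - Real.log (1 + Real.exp (-|x - y|))

lemma log_one_add_exp (t : ℝ) :
    Real.log (1 + Real.exp t) = max 0 t + Real.log (1 + Real.exp (-|t|)) := by
  rcases le_or_gt 0 t with h | h
  · rw [abs_of_nonneg h, max_eq_right h]
    have : (1 : ℝ) + Real.exp t = Real.exp t * (1 + Real.exp (-t)) := by
      rw [mul_add, mul_one, ← Real.exp_add, add_neg_cancel, Real.exp_zero, add_comm]
    rw [this, Real.log_mul (Real.exp_ne_zero t) (by positivity), Real.log_exp]
  · rw [abs_of_nonpos h.le, max_eq_left h.le, neg_neg, zero_add]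

lemma log_exp_add_exp (x y : ℝ) :
    Real.log (Real.exp x + Real.exp y) = max x y + Real.log (1 + Real.exp (-|x - y|)) := by
  rcases le_total y x with h | h
  · rw [abs_of_nonneg (by linarith), max_eq_left h]
    have : Real.exp x + Real.exp y = Real.exp x * (1 + Real.exp (-(x - y))) := by
      rw [mul_add, mul_one, ← Real.exp_add]; ring_nf
    rw [this, Real.log_mul (Real.exp_ne_zero x) (by positivity), Real.log_exp]
  · rw [abs_of_nonpos (by linarith), max_eq_right h, neg_neg]
    have : Real.exp x + Real.exp y = Real.exp y * (1 + Real.exp (x - y)) := by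
      rw [mul_add, mul_one, ← Real.exp_add]; ring_nf
    rw [this, Real.log_mul (Real.exp_ne_zero y) (by positivity), Real.log_exp]

lemma max_sub_max (x y : ℝ) :
    max 0 (x + y) - max x y = Real.sign x * Real.sign y * min |x| |y| := by
  rcases lt_trichotomy x 0 with hx | hx | hx <;>
    rcases lt_trichotomy y 0 with hy | hy | hy <;>
    simp_all [Real.sign_of_neg, Real.sign_of_pos, Real.sign_zero,
      abs_of_neg, abs_of_pos] <;>
    rcases le_total (x + y) 0 with h | h <;>
    rcases le_total x y with h2 | h2 <;>
    simp_all [max_eq_left, max_eq_right, min_def, abs_of_neg, abs_of_pos] <;>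
    first | (split_ifs <;> linarith) | linarith | (intro; linarith)

theorem boxplus_eq_minsum_add_sCorr (x y : ℝ) :
    boxplus x y = Real.sign x * Real.sign y * min |x| |y| + sCorr x y := by
  unfold boxplus sCorr
  rw [Real.log_div (by positivity) (by positivity), log_one_add_exp, log_exp_add_exp,
    ← max_sub_max]
  ring
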